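/- Let a_1, ..., a_m ≥ 2 be integers and define p, q by p/q = [a_1, ..., a_m]^- in lowest terms. Then the m × m tridiagonal matrix M with diagonal entries a_i and off-diagonal entries -1 satisfies det(M) = p, and Z^m / M Z^m is a cyclic group of order p. -/

import Mathlib

open scoped BigOperators

def ncf : List ℚ → ℚ
  | [] => 0
  | [b] => b
  | b :: c :: l => b - 1 / ncf (c :: l)

def triMat (m : ℕ) (a : ℕ → ℤ) : Matrix (Fin m) (Fin m) ℤ :=
  Matrix.of fun i j =>
    if i = j then a (i.val + 1)
    else if i.val + 1 = j.val ∨ j.val + 1 = i.val then -1 else 0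

namespace Stmt15

def C : ℕ → (ℕ → ℤ) → ℤ
  | 0, _ => 1
  | 1, b => b 1
  | (k+2), b => b (k+2) * C (k+1) b - C k b

def sh (a : ℕ → ℤ) : ℕ → ℤ := fun n => a (n+1)

lemma C_two (k : ℕ) (b : ℕ → ℤ) : C (k+2) b = b (k+2) * C (k+1) b - C k b := by
  simp [C]

lemma C_shift : ∀ (k : ℕ) (a : ℕ → ℤ),
    C (k+2) a = a 1 * C (k+1) (sh a) - C k (sh (sh a))
  | 0, a => by simp [C, sh]; ring
  | 1, a => by simp [C, sh]; ring
  | (k+2), a => by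
      have h1 := C_shift (k+1) a
      have h2 := C_shift k a
      rw [C_two (k+2) a, show k+2+1 = k+1+2 from rfl, C_two (k+1) (sh a),
        C_two k (sh (sh a)), h1, h2]
      simp only [sh]
      simp only [show k+1+1 = k+2 from rfl, show k+1+2 = k+3 from rfl,
        show k+2+2 = k+4 from rfl, show k+1+2+1 = k+4 from rfl,
        show k+2+1+1 = k+4 from rfl]
      ring

lemma triMat_apply (m : ℕ) (a : ℕ → ℤ) (i j : Fin m) :
    triMat m a i j = if (i:ℕ) = (j:ℕ) then a ((i:ℕ)+1)
      else if (i:ℕ)+1 = (j:ℕ) ∨ (j:ℕ)+1 = (i:ℕ) then -1 else 0 := by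
  simp [triMat, Fin.ext_iff]

lemma C_key : ∀ (k : ℕ), (∀ a : ℕ → ℤ, (∀ i, 1 ≤ i → i ≤ k → 2 ≤ a i) → 1 ≤ C k a) ∧
    (∀ a : ℕ → ℤ, (∀ i, 1 ≤ i → i ≤ k+1 → 2 ≤ a i) → C k (sh a) + 1 ≤ C (k+1) a)
  | 0 => by
      constructor
      · intro a _; simp [C]
      · intro a ha; have := ha 1 le_rfl le_rfl; simp [C, sh]; omega
  | 1 => by
      constructor
      · intro a ha; have := ha 1 le_rfl le_rfl; simp [C]; omega
      · intro a ha
        have h1 := ha 1 le_rfl (by omega)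
        have h2 := ha 2 (by omega) le_rfl
        simp only [C, C_two, sh]
        nlinarith
  | (k+2) => by
      obtain ⟨P1, Q1⟩ := C_key (k+1)
      obtain ⟨P0, Q0⟩ := C_key k
      have hshift : ∀ (n : ℕ) (a : ℕ → ℤ), (∀ i, 1 ≤ i → i ≤ n+1 → 2 ≤ a i) →
          (∀ i, 1 ≤ i → i ≤ n → 2 ≤ sh a i) := by
        intro n a ha i h1 h2; exact ha (i+1) (by omega) (by omega)
      constructor
      · intro a ha
        rw [C_shift]
        have hX : C k (sh (sh a)) + 1 ≤ C (k+1) (sh a) := Q0 (sh a) (hshift (k+1) a ha)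
        have hY : 1 ≤ C k (sh (sh a)) :=
          P0 (sh (sh a)) (hshift k (sh a) (hshift (k+1) a ha))
        have ha1 : 2 ≤ a 1 := ha 1 le_rfl (by omega)
        nlinarith
      · intro a ha
        rw [show k+2+1 = (k+1)+2 from rfl, C_shift (k+1) a]
        have hX : C (k+1) (sh (sh a)) + 1 ≤ C (k+2) (sh a) := Q1 (sh a) (hshift (k+2) a ha)
        have hY : 1 ≤ C (k+1) (sh (sh a)) :=
          P1 (sh (sh a)) (hshift (k+1) (sh a) (hshift (k+2) a ha))
        have ha1 : 2 ≤ a 1 := ha 1 le_rfl (by omega)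
        nlinarith

lemma C_cop : ∀ (k : ℕ) (a : ℕ → ℤ), IsCoprime (C (k+1) a) (C k (sh a))
  | 0, a => by simpa [C] using isCoprime_one_right (x := a 1)
  | (k+1), a => by
      have h := ((C_cop k (sh a)).symm.neg_left).add_mul_left_left (a 1)
      rw [show k+1+1 = k+2 from rfl, C_shift k a,
        show a 1 * C (k+1) (sh a) - C k (sh (sh a))
          = -C k (sh (sh a)) + C (k+1) (sh a) * a 1 by ring]
      exact h
lemma ncf_cons (b : ℚ) (L : List ℚ) (h : L ≠ []) : ncf (b :: L) = b - 1 / ncf L := by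
  cases L with
  | nil => simp at h
  | cons c l => rfl

lemma ncf_eq : ∀ (k : ℕ) (a : ℕ → ℤ), (∀ i, 1 ≤ i → i ≤ k+1 → 2 ≤ a i) →
    ncf ((List.range (k+1)).map fun i => ((a (i+1) : ℤ) : ℚ))
      = (C (k+1) a : ℚ) / (C k (sh a) : ℚ)
  | 0, a, _ => by simp [ncf, C, sh]
  | (k+1), a, ha => by
      have hshift : ∀ i, 1 ≤ i → i ≤ k+1 → 2 ≤ sh a i := by
        intro i h1 h2; exact ha (i+1) (by omega) (by omega)
      rw [List.range_succ_eq_map, List.map_cons, List.map_map]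
      rw [ncf_cons _ _ (by simp [List.range_succ_eq_map])]
      have hmap : List.map ((fun i => ((a (i+1) : ℤ) : ℚ)) ∘ Nat.succ) (List.range (k+1))
          = List.map (fun i => (((sh a) (i+1) : ℤ) : ℚ)) (List.range (k+1)) := by
        apply List.map_congr_left
        intro i _
        simp [sh, Function.comp, Nat.succ_eq_add_one]
      rw [hmap, ncf_eq k (sh a) hshift]
      have hX : 1 ≤ C (k+1) (sh a) := (C_key (k+1)).1 (sh a) hshift
      have hY : 1 ≤ C k (sh (sh a)) := (C_key k).1 (sh (sh a)) (by
        intro i h1 h2; exact hshift (i+1) (by omega) (by omega))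
      have hX0 : (C (k+1) (sh a) : ℚ) ≠ 0 := by exact_mod_cast (by omega : C (k+1) (sh a) ≠ 0)
      have hY0 : (C k (sh (sh a)) : ℚ) ≠ 0 := by exact_mod_cast (by omega : C k (sh (sh a)) ≠ 0)
      rw [C_shift]
      push_cast
      field_simp
lemma val_succAbove {n : ℕ} (p : Fin (n+1)) (j : Fin n) :
    ((p.succAbove j) : ℕ) = if (j:ℕ) < (p:ℕ) then (j:ℕ) else (j:ℕ)+1 := by
  rw [Fin.succAbove]
  split_ifs with h1 h2 h2 <;>
    simp_all [Fin.lt_def, Fin.castSucc, Fin.castAdd, Fin.castLE, Fin.val_succ]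

lemma submatrix0 (n : ℕ) (b : ℕ → ℤ) :
    (triMat (n+1) b).submatrix Fin.succ (Fin.succAbove 0) = triMat n (sh b) := by
  ext i j
  simp only [Matrix.submatrix_apply, Fin.succAbove_zero, triMat_apply, Fin.val_succ, sh]
  split_ifs <;> simp_all <;> first | rfl | ring1 | omega | (congr 1; omega)

lemma submatrix1 (n : ℕ) (b : ℕ → ℤ) :
    (((triMat (n+2) b).submatrix Fin.succ (Fin.succAbove (Fin.succ (0 : Fin (n+1))))).submatrix
      (Fin.succAbove 0) Fin.succ) = triMat n (sh (sh b)) := by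
  ext i j
  simp only [Matrix.submatrix_apply, Fin.succAbove_zero, triMat_apply, Fin.val_succ, sh,
    val_succAbove, Fin.val_zero]
  split_ifs <;> simp_all <;> first | rfl | ring1 | omega | (congr 1; omega)

lemma det_triMat : ∀ (m : ℕ) (a : ℕ → ℤ), (triMat m a).det = C m a
  | 0, a => by simp [C]
  | 1, a => by simp [Matrix.det_fin_one, triMat, C]
  | (n+2), a => by
      rw [show n+2 = (n+1)+1 from rfl] at *
      rw [Matrix.det_succ_row_zero, Fin.sum_univ_succ, Fin.sum_univ_succ]
      have htail : ∀ i : Fin n,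
          (-1 : ℤ) ^ ((Fin.succ (Fin.succ i) : Fin (n+1+1)) : ℕ)
            * triMat (n+1+1) a 0 (Fin.succ (Fin.succ i))
            * ((triMat (n+1+1) a).submatrix Fin.succ
                (Fin.succAbove (Fin.succ (Fin.succ i)))).det = 0 := by
        intro i
        have h0 : triMat (n+1+1) a 0 (Fin.succ (Fin.succ i)) = 0 := by
          rw [triMat_apply]
          simp only [Fin.val_succ, Fin.val_zero]
          split_ifs <;> simp_all <;> first | rfl | ring1 | omega | (congr 1; omega)
        rw [h0]; ring
      rw [Finset.sum_congr rfl (fun i _ => htail i), Finset.sum_const_zero]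
      have h00 : triMat (n+1+1) a 0 0 = a 1 := by
        rw [triMat_apply]; simp
      have h01 : triMat (n+1+1) a 0 (Fin.succ (0 : Fin (n+1))) = -1 := by
        rw [triMat_apply]; simp
      rw [h00, h01, submatrix0 (n+1) a, det_triMat (n+1) (sh a)]
      have hS : ((triMat (n+1+1) a).submatrix Fin.succ
          (Fin.succAbove (Fin.succ (0 : Fin (n+1))))).det = -C n (sh (sh a)) := by
        rw [Matrix.det_succ_column_zero, Fin.sum_univ_succ]
        have hcol0 : ∀ i : Fin (n+1),
            (triMat (n+1+1) a).submatrix Fin.succ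
              (Fin.succAbove (Fin.succ (0 : Fin (n+1)))) i 0
            = if (i : ℕ) = 0 then -1 else 0 := by
          intro i
          simp only [Matrix.submatrix_apply, triMat_apply, Fin.val_succ, val_succAbove,
            Fin.val_zero]
          split_ifs <;> simp_all <;> first | rfl | ring1 | omega | (congr 1; omega)
        have htail2 : ∀ i : Fin n,
            (-1 : ℤ) ^ ((Fin.succ i : Fin (n+1)) : ℕ)
              * (triMat (n+1+1) a).submatrix Fin.succ
                  (Fin.succAbove (Fin.succ (0 : Fin (n+1)))) (Fin.succ i) 0
              * (((triMat (n+1+1) a).submatrix Fin.succ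
                  (Fin.succAbove (Fin.succ (0 : Fin (n+1))))).submatrix
                    (Fin.succAbove (Fin.succ i)) Fin.succ).det = 0 := by
          intro i
          rw [hcol0]
          simp
        rw [Finset.sum_congr rfl (fun i _ => htail2 i), Finset.sum_const_zero, hcol0]
        rw [submatrix1 n a, det_triMat n (sh (sh a))]
        simp
      rw [hS]
      rw [C_shift]
      simp
      ring
lemma col_eq (k : ℕ) (a : ℕ → ℤ) (j : ℕ) (hj : j < k+1) :
    (fun i => triMat (k+1) a i ⟨j, hj⟩)
      = a (j+1) • Pi.single (⟨j, hj⟩ : Fin (k+1)) (1:ℤ)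
        - (if h : 1 ≤ j then Pi.single (⟨j-1, by omega⟩ : Fin (k+1)) (1:ℤ) else 0)
        - (if h : j+1 < k+1 then Pi.single (⟨j+1, h⟩ : Fin (k+1)) (1:ℤ) else 0) := by
  funext i
  rcases i with ⟨i, hi⟩
  by_cases h1 : 1 ≤ j <;> by_cases h2 : j+1 < k+1 <;>
    simp only [h1, h2, dif_pos, dif_neg, not_true, not_false_iff, triMat_apply,
      Pi.sub_apply, Pi.smul_apply, Pi.zero_apply, Pi.single_apply, smul_eq_mul,
      Fin.mk.injEq, sub_zero] <;>
    split_ifs <;> (try simp_all) <;>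
      first
      | rfl
      | ring1
      | omega
      | (congr 1; omega)
      | (exfalso; first | omega | (rcases ‹_ ∨ _› with _ | _ <;> omega))
end Stmt15

open Stmt15 in
theorem stmt15 (m : ℕ) (hm : 1 ≤ m) (a : ℕ → ℤ) (ha : ∀ i, 1 ≤ i → i ≤ m → 2 ≤ a i)
    (p q : ℕ) (hq : 0 < q) (hcop : Nat.Coprime p q)
    (hpq : (p : ℚ) / (q : ℚ) = ncf ((List.range m).map fun i => ((a (i + 1) : ℤ) : ℚ))) :
    (triMat m a).det = (p : ℤ) ∧
      IsAddCyclic ((Fin m → ℤ) ⧸ LinearMap.range (Matrix.toLin' (triMat m a))) ∧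
      Nat.card ((Fin m → ℤ) ⧸ LinearMap.range (Matrix.toLin' (triMat m a))) = p := by
  obtain ⟨k, rfl⟩ : ∃ k, m = k + 1 := ⟨m - 1, by omega⟩
  -- Step 1: p = C (k+1) a
  have hX1 : 1 ≤ C (k+1) a := (C_key (k+1)).1 a ha
  have hsh : ∀ i, 1 ≤ i → i ≤ k → 2 ≤ sh a i := fun i h1 h2 => ha (i+1) (by omega) (by omega)
  have hY1 : 1 ≤ C k (sh a) := (C_key k).1 (sh a) hsh
  rw [ncf_eq k a ha] at hpq
  have hq0 : ((q : ℕ) : ℚ) ≠ 0 := by exact_mod_cast hq.ne'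
  have hY0 : ((C k (sh a) : ℤ) : ℚ) ≠ 0 := by exact_mod_cast (by omega : C k (sh a) ≠ 0)
  have hcross : (p : ℤ) * C k (sh a) = C (k+1) a * q := by
    exact_mod_cast (div_eq_div_iff hq0 hY0).mp hpq
  have hcopZ : IsCoprime (p : ℤ) (q : ℤ) := Nat.isCoprime_iff_coprime.mpr hcop
  have hdvd1 : (p : ℤ) ∣ C (k+1) a := by
    apply hcopZ.dvd_of_dvd_mul_right
    exact ⟨C k (sh a), hcross.symm⟩
  have hdvd2 : C (k+1) a ∣ (p : ℤ) := by
    apply (C_cop k a).dvd_of_dvd_mul_right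
    exact ⟨(q : ℤ), by linarith [hcross]⟩
  have hp : (p : ℤ) = C (k+1) a :=
    Int.dvd_antisymm (by positivity) (by omega) hdvd1 hdvd2
  have hdet : (triMat (k+1) a).det = (p : ℤ) := by rw [det_triMat, hp]
  have hp1 : 1 ≤ p := by exact_mod_cast hp ▸ hX1
  refine ⟨hdet, ?_⟩
  -- Step 2: quotient machinery
  set M : Matrix (Fin (k+1)) (Fin (k+1)) ℤ := triMat (k+1) a with hM
  set R : Submodule ℤ (Fin (k+1) → ℤ) := LinearMap.range (Matrix.toLin' M) with hR
  set g : (Fin (k+1) → ℤ) ⧸ R := R.mkQ (Pi.single 0 1) with hg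
  have hcolmem : ∀ jj : Fin (k+1), (fun i => M i jj) ∈ R := by
    intro jj
    refine ⟨Pi.single jj 1, ?_⟩
    rw [Matrix.toLin'_apply, Matrix.mulVec_single]
    funext i; simp
  have key : ∀ n : ℕ, ∀ hn : n < k+1,
      ∃ c : ℤ, R.mkQ (Pi.single (⟨n, hn⟩ : Fin (k+1)) (1:ℤ)) = c • g := by
    intro n
    induction n using Nat.strong_induction_on with
    | _ n ih =>
      intro hn
      match n, hn with
      | 0, hn =>
        refine ⟨1, ?_⟩
        rw [one_smul, hg]
        congr 1
      | (j+1), hn =>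
        obtain ⟨c, hc⟩ := ih j (by omega) (by omega)
        have hprev : ∃ d : ℤ, R.mkQ (if h : 1 ≤ j then
            Pi.single (⟨j-1, by omega⟩ : Fin (k+1)) (1:ℤ) else 0) = d • g := by
          by_cases hj : 1 ≤ j
          · obtain ⟨d, hd⟩ := ih (j-1) (by omega) (by omega)
            exact ⟨d, by rw [dif_pos hj]; exact hd⟩
          · exact ⟨0, by rw [dif_neg hj, map_zero, zero_smul]⟩
        obtain ⟨d, hd⟩ := hprev
        refine ⟨a (j+1) * c - d, ?_⟩
        have hmk := congrArg R.mkQ (col_eq k a j (by omega))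
        rw [map_sub, map_sub, map_smul] at hmk
        have hc0 : R.mkQ (fun i => M i ⟨j, by omega⟩) = 0 := by
          rw [Submodule.mkQ_apply, Submodule.Quotient.mk_eq_zero]
          exact hcolmem _
        rw [hc0, hd, hc, dif_pos hn] at hmk
        have hsolve := (sub_eq_zero.mp hmk.symm)
        rw [← hsolve, smul_smul, ← sub_smul]
  have hsingle : ∀ jj : Fin (k+1), ∃ c : ℤ, R.mkQ (Pi.single jj (1:ℤ)) = c • g := by
    intro jj
    have := key jj.val jj.isLt
    rwa [Fin.eta] at this
  have keyall : ∀ x : Fin (k+1) → ℤ, ∃ c : ℤ, R.mkQ x = c • g := by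
    intro x
    choose cf hcf using hsingle
    refine ⟨∑ j, x j * cf j, ?_⟩
    conv_lhs => rw [← Finset.univ_sum_single x]
    rw [map_sum, Finset.sum_smul]
    refine Finset.sum_congr rfl ?_
    intro j _
    have h1 : Pi.single j (x j) = x j • (Pi.single j 1 : Fin (k+1) → ℤ) := by
      funext i; by_cases h : i = j <;> simp [Pi.single_apply, h]
    rw [h1, map_smul, hcf j, smul_smul]
  haveI : NeZero p := ⟨by omega⟩
  set cc : Fin (k+1) → ZMod p := fun jj => ((C jj.val a : ℤ) : ZMod p) with hcc
  set f : (Fin (k+1) → ℤ) →ₗ[ℤ] ZMod p := Fintype.linearCombination ℤ cc with hf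
  have hfsingle : ∀ (jj : Fin (k+1)) (r : ℤ), f (Pi.single jj r) = r • cc jj := by
    intro jj r
    rw [hf, Fintype.linearCombination_apply_single]
  have hpz : ((C (k+1) a : ℤ) : ZMod p) = 0 := by
    rw [← hp]; push_cast; exact ZMod.natCast_self p
  have hfcol : ∀ (j : ℕ) (hj : j < k+1), f (fun i => M i ⟨j, hj⟩) = 0 := by
    intro j hj
    rw [hM, col_eq k a j hj, map_sub, map_sub, map_smul, hfsingle, one_smul]
    by_cases h1 : 1 ≤ j <;> by_cases h2 : j+1 < k+1 <;>
      simp only [dif_pos, dif_neg, dite_false, dite_true, h1, h2, hfsingle, one_smul, map_zero,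
        sub_zero, neg_zero, zero_sub, hcc, zsmul_eq_mul]
    · obtain ⟨l, rfl⟩ : ∃ l, j = l+1 := ⟨j-1, by omega⟩
      simp only [show l+1+1 = l+2 from rfl, Nat.add_sub_cancel]
      have hZ : a (l+2) * C (l+1) a - C l a - C (l+2) a = 0 := by rw [C_two]; try ring
      have hZ' := congrArg (fun z : ℤ => (z : ZMod p)) hZ
      push_cast at hZ'
      linear_combination hZ'
    · obtain ⟨l, rfl⟩ : ∃ l, j = l+1 := ⟨j-1, by omega⟩
      have hk : k = l+1 := by omega
      subst hk
      simp only [show l+1+1 = l+2 from rfl, Nat.add_sub_cancel]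
      have hZ : a (l+2) * C (l+1) a - C l a = C (l+2) a := by rw [C_two]; try ring
      have hZ' := congrArg (fun z : ℤ => (z : ZMod p)) hZ
      push_cast at hZ'
      rw [show l+1+1 = l+2 from rfl] at hpz
      linear_combination hZ' + hpz
    · have h0 : j = 0 := by omega
      subst h0
      have hZ : C 1 a = a 1 := by simp [C]
      have hZ' := congrArg (fun z : ℤ => (z : ZMod p)) hZ
      push_cast at hZ'
      simp only [show (0:ℕ)+1 = 1 from rfl, show C 0 a = (1:ℤ) from rfl]
      push_cast
      linear_combination -hZ'
    · have h0 : j = 0 := by omega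
      have hk : k = 0 := by omega
      subst h0; subst hk
      have hZ : C 1 a = a 1 := by simp [C]
      have hZ' := congrArg (fun z : ℤ => (z : ZMod p)) hZ
      push_cast at hZ'
      simp only [show (0:ℕ)+1 = 1 from rfl, show C 0 a = (1:ℤ) from rfl]
      push_cast
      rw [show (0:ℕ)+1 = 1 from rfl] at hpz
      linear_combination hpz - hZ'
  have hker : R ≤ LinearMap.ker f := by
    rintro y ⟨x, rfl⟩
    rw [LinearMap.mem_ker]
    have hcomp : f.comp (Matrix.toLin' M) = 0 := by
      apply (Pi.basisFun ℤ (Fin (k+1))).ext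
      intro jj
      rw [Pi.basisFun_apply]
      simp only [LinearMap.comp_apply, LinearMap.zero_apply]
      rw [Matrix.toLin'_apply, Matrix.mulVec_single]
      have hb : (fun i => M i jj * 1) = fun i => M i jj := by funext i; ring
      rw [show MulOpposite.op (1:ℤ) • M.col jj = fun i => M i jj from by funext i; simp]
      have := hfcol jj.val jj.isLt
      rwa [Fin.eta] at this
    have := LinearMap.congr_fun hcomp x
    simpa using this
  set F : ((Fin (k+1) → ℤ) ⧸ R) →ₗ[ℤ] ZMod p := R.liftQ f hker with hF
  have hFmk : ∀ x, F (R.mkQ x) = f x := fun x => by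
    rw [hF, Submodule.mkQ_apply, Submodule.liftQ_apply]
  have hFg : F g = 1 := by
    rw [hg, hFmk, hfsingle, one_smul, hcc]
    show ((C ((0 : Fin (k+1)) : ℕ) a : ℤ) : ZMod p) = 1
    norm_num [show C 0 a = (1:ℤ) from rfl]
  have hpg : (p : ℤ) • g = 0 := by
    have hmem : (p:ℤ) • (Pi.single (0 : Fin (k+1)) (1:ℤ)) ∈ R := by
      refine ⟨M.cramer (Pi.single 0 1), ?_⟩
      rw [Matrix.toLin'_apply, Matrix.mulVec_cramer, hdet]
    rw [hg, ← map_smul, Submodule.mkQ_apply, Submodule.Quotient.mk_eq_zero]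
    exact hmem
  have hsurjF : Function.Surjective F := by
    intro z
    obtain ⟨c, rfl⟩ := ZMod.intCast_surjective z
    exact ⟨c • g, by rw [map_smul, hFg, Int.smul_one_eq_cast]⟩
  have hinjF : Function.Injective F := by
    have h0 : ∀ y, F y = 0 → y = 0 := by
      intro y hy
      obtain ⟨x, rfl⟩ := R.mkQ_surjective y
      obtain ⟨c, hcq⟩ := keyall x
      rw [hcq] at hy ⊢
      rw [map_smul, hFg, Int.smul_one_eq_cast] at hy
      obtain ⟨d, rfl⟩ := (ZMod.intCast_zmod_eq_zero_iff_dvd c p).mp hy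
      rw [show ((p:ℤ) * d) • g = d • ((p:ℤ) • g) from by rw [mul_comm, mul_smul], hpg,
        smul_zero]
    intro y y' hyy
    have h := h0 (y - y') (by rw [map_sub, hyy, sub_self])
    exact sub_eq_zero.mp h
  have hbij : Function.Bijective F := ⟨hinjF, hsurjF⟩
  constructor
  · exact isAddCyclic_of_surjective (AddEquiv.ofBijective F.toAddMonoidHom hbij).symm
      (AddEquiv.ofBijective F.toAddMonoidHom hbij).symm.surjective
  · rw [Nat.card_congr (AddEquiv.ofBijective F.toAddMonoidHom hbij).toEquiv, Nat.card_zmod]
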